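/- For every positive integer M, every j ∈ 1/2 + ℤ, every τ in the upper half-plane, and every z ∈ ℂ at which all theta values occurring in denominators below are nonzero: Ψ^{[M;0]}_{j,j}(τ, z, z, 0) / R^{NS,−}(τ, z) = −q^{j²/M} e^{(4πi/M) j z} · [ϑ₀₀(Mτ, z + jτ) ϑ₀₁(Mτ, z + jτ) ϑ₁₀(Mτ, z + jτ) / ϑ₁₁(Mτ, z + jτ)] · [ϑ₀₁(τ, z) / (ϑ₀₀(τ, z) ϑ₁₀(τ, z) ϑ₁₁(τ, z))]. -/

import Mathlib

open Complex

/-- Jacobi theta function with characteristics `a b ∈ {0,1}` (allowing real characteristics):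
`ϑ_{ab}(τ, z) = Σ_{n ∈ ℤ} exp(πi(n + a/2)²τ + 2πi(n + a/2)(z + b/2))`. -/
noncomputable def jTheta (a b : ℝ) (τ z : ℂ) : ℂ :=
  ∑' n : ℤ, Complex.exp ((Real.pi : ℂ) * I * ((n : ℂ) + (a : ℂ) / 2) ^ 2 * τ +
    2 * (Real.pi : ℂ) * I * ((n : ℂ) + (a : ℂ) / 2) * (z + (b : ℂ) / 2))

/-- Dedekind eta function `η(τ) = e^{πiτ/12} Π_{n=1}^∞ (1 - q^n)`, `q = e^{2πiτ}`. -/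
noncomputable def dedekindEta (τ : ℂ) : ℂ :=
  Complex.exp ((Real.pi : ℂ) * I * τ / 12) *
    ∏' n : ℕ, (1 - Complex.exp (2 * (Real.pi : ℂ) * I * τ) ^ (n + 1))

/-- The function `Ψ^{[M;ε]}_{j,k}(τ, z₁, z₂, t)` (the paper's `Ψ^{[M,1,0;ε]}_{j,k;ε'}` in closed
form for `m = 1`):
`-i e^{-2πit/M} q^{jk/M} e^{(2πi/M)(k z₁ + j z₂)} η(Mτ)³ ϑ₁₁(Mτ, z₁+z₂+(j+k)τ) /
  (ϑ₁₁(Mτ, z₁+jτ+ε) ϑ₁₁(Mτ, z₂+kτ-ε))` where `q = e^{2πiτ}`. -/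
noncomputable def Psi (M : ℕ) (ε j k : ℝ) (τ z₁ z₂ t : ℂ) : ℂ :=
  -I * Complex.exp (-(2 * (Real.pi : ℂ) * I * t) / (M : ℂ)) *
    Complex.exp (2 * (Real.pi : ℂ) * I * τ * ((j : ℂ) * (k : ℂ) / (M : ℂ))) *
    Complex.exp (2 * (Real.pi : ℂ) * I / (M : ℂ) * ((k : ℂ) * z₁ + (j : ℂ) * z₂)) *
    (dedekindEta ((M : ℂ) * τ)) ^ 3 *
    jTheta 1 1 ((M : ℂ) * τ) (z₁ + z₂ + ((j : ℂ) + (k : ℂ)) * τ) /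
    (jTheta 1 1 ((M : ℂ) * τ) (z₁ + (j : ℂ) * τ + (ε : ℂ)) *
     jTheta 1 1 ((M : ℂ) * τ) (z₂ + (k : ℂ) * τ - (ε : ℂ)))

/-- The N=4 Neveu–Schwarz super-denominator `R^{NS,-}(τ,z) = i η(τ)³ ϑ₁₁(τ,2z) / ϑ₀₁(τ,z)²`. -/
noncomputable def RNSminus (τ z : ℂ) : ℂ :=
  I * (dedekindEta τ) ^ 3 * jTheta 1 1 τ (2 * z) / (jTheta 0 1 τ z) ^ 2


open Finset Filter Topology

local notation "π" => (Real.pi : ℂ)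

section ThetaAux

-- A1: finite product bound
lemma norm_prod_one_add_sub_one_le (S : Finset ℕ) (f : ℕ → ℂ) :
    ‖(∏ i ∈ S, (1 + f i)) - 1‖ ≤ Real.exp (∑ i ∈ S, ‖f i‖) - 1 := by
  classical
  induction S using Finset.cons_induction with
  | empty => simp
  | cons j S hj ih =>
    rw [Finset.prod_cons, Finset.sum_cons]
    have h1 : (1 + f j) * (∏ i ∈ S, (1 + f i)) - 1
        = ((∏ i ∈ S, (1 + f i)) - 1) * (1 + f j) + f j := by ring
    rw [h1]
    have h2 : ‖((∏ i ∈ S, (1 + f i)) - 1) * (1 + f j) + f j‖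
        ≤ ‖(∏ i ∈ S, (1 + f i)) - 1‖ * ‖1 + f j‖ + ‖f j‖ := by
      calc _ ≤ ‖((∏ i ∈ S, (1 + f i)) - 1) * (1 + f j)‖ + ‖f j‖ := norm_add_le _ _
        _ = _ := by rw [norm_mul]
    refine h2.trans ?_
    have h3 : ‖(1 : ℂ) + f j‖ ≤ Real.exp ‖f j‖ := by
      calc ‖(1:ℂ) + f j‖ ≤ ‖(1:ℂ)‖ + ‖f j‖ := norm_add_le _ _
        _ = ‖f j‖ + 1 := by rw [norm_one]; ring
        _ ≤ Real.exp ‖f j‖ := Real.add_one_le_exp _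
    have h4 : ‖f j‖ ≤ Real.exp ‖f j‖ - 1 := by
      have := Real.add_one_le_exp ‖f j‖; linarith
    have hnn : (0:ℝ) ≤ ‖(∏ i ∈ S, (1 + f i)) - 1‖ := norm_nonneg _
    have hexp : Real.exp (‖f j‖ + ∑ i ∈ S, ‖f i‖) = Real.exp ‖f j‖ * Real.exp (∑ i ∈ S, ‖f i‖) :=
      Real.exp_add _ _
    nlinarith [Real.exp_pos ‖f j‖, Real.exp_pos (∑ i ∈ S, ‖f i‖),
      mul_le_mul_of_nonneg_right h3 hnn, ih]

-- A2': pointwise lower bound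
lemma one_sub_ge_exp {a c : ℝ} (ha : 0 ≤ a) (hac : a ≤ c) (hc : c < 1) :
    Real.exp (-(a / (1 - c))) ≤ 1 - a := by
  have hc1 : 0 < 1 - c := by linarith
  have ha1 : 0 < 1 - a := by linarith
  rw [Real.exp_neg]
  rw [inv_le_comm₀ (Real.exp_pos _) ha1]
  calc (1 - a)⁻¹ ≤ 1 + a / (1 - c) := by
        rw [inv_le_iff_one_le_mul₀ ha1]
        have h2 : (1 + a / (1-c)) * (1 - a) - 1 = ((c-a)*a) / (1-c) := by
          field_simp; ring
        nlinarith [mul_nonneg (sub_nonneg.2 hac) ha, div_nonneg (mul_nonneg (sub_nonneg.2 hac) ha) hc1.le]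
    _ ≤ Real.exp (a / (1 - c)) := by
        have := Real.add_one_le_exp (a / (1 - c)); linarith

-- A2: product lower bound
lemma prod_one_sub_ge (S : Finset ℕ) (a : ℕ → ℝ) (c : ℝ) (hc : c < 1)
    (h0 : ∀ i, 0 ≤ a i) (h1 : ∀ i, a i ≤ c) :
    Real.exp (-((∑ i ∈ S, a i) / (1 - c))) ≤ ∏ i ∈ S, (1 - a i) := by
  classical
  induction S using Finset.cons_induction with
  | empty => simp
  | cons j S hj ih =>
    rw [Finset.prod_cons, Finset.sum_cons, add_div, neg_add, Real.exp_add]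
    exact mul_le_mul (one_sub_ge_exp (h0 j) (h1 j) hc) ih (Real.exp_pos _).le
      (by linarith [h1 j, hc])


-- zero factor ⇒ HasProd 0
lemma hasProd_zero_of_exists_zero {f : ℕ → ℂ} (h : ∃ n, f n = 0) : HasProd f 0 := by
  obtain ⟨n, hn⟩ := h
  have : ∀ᶠ s in atTop, ∏ i ∈ s, f i = 0 := by
    filter_upwards [Filter.eventually_ge_atTop {n}] with s hs
    exact Finset.prod_eq_zero (hs (Finset.mem_singleton_self n)) hn
  exact (tendsto_const_nhds.congr' (by filter_upwards [this] with s hs using hs.symm))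

lemma multipliable_one_add {f : ℕ → ℂ} (hf : Summable f) :
    Multipliable fun n => 1 + f n := by
  by_cases hz : ∃ n, (1 : ℂ) + f n = 0
  · exact ⟨0, hasProd_zero_of_exists_zero hz⟩
  push_neg at hz
  refine Complex.multipliable_of_summable_log ?_
  -- Summable (fun n => log (1 + f n))
  obtain ⟨N, hN⟩ : ∃ N, ∀ n ≥ N, ‖f n‖ ≤ 1/2 := by
    have := hf.tendsto_atTop_zero.norm
    simp only [norm_zero] at this
    have := (this.eventually (eventually_le_nhds (by norm_num : (0:ℝ) < 1/2))).exists_forall_of_atTop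
    simpa using this
  rw [← summable_nat_add_iff N]
  apply Summable.of_norm_bounded (g := fun n => 3/2 * ‖f (n + N)‖)
  · exact ((summable_nat_add_iff N).2 hf.norm).mul_left _
  · intro n
    exact Complex.norm_log_one_add_half_le_self (by simpa using hN (n + N) (Nat.le_add_left _ _))

-- geometric-type summability
lemma summable_aux (c p : ℂ) (hp : ‖p‖ < 1) (a b : ℕ) (ha : 0 < a) :
    Summable fun i : ℕ => c * p ^ (a * i + b) := by
  apply Summable.mul_left
  have h1 : ∀ i : ℕ, ‖p ^ (a * i + b)‖ ≤ ‖p‖ ^ i := by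
    intro i
    rw [norm_pow]
    exact pow_le_pow_of_le_one (norm_nonneg p) hp.le
      (by nlinarith [Nat.one_le_iff_ne_zero.2 ha.ne'])
  exact Summable.of_norm_bounded (summable_geometric_of_lt_one (norm_nonneg p) hp) h1

-- summability over ℤ of the theta-type bound
lemma summable_theta_bound (p x : ℂ) (hp : ‖p‖ < 1) (hp0 : p ≠ 0) (hx : x ≠ 0) :
    Summable fun l : ℤ => ‖p ^ (l ^ 2) * x ^ l‖ := by
  have key : ∀ y : ℂ, y ≠ 0 → Summable fun n : ℕ => ‖p ^ ((n : ℤ) ^ 2) * y ^ (n : ℤ)‖ := by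
    intro y hy
    apply summable_of_ratio_norm_eventually_le (r := 1/2) (by norm_num)
    have hten : Tendsto (fun n : ℕ => ‖p‖ ^ (2 * n + 1) * ‖y‖) atTop (𝓝 0) := by
      have h0 : Tendsto (fun n : ℕ => ‖p‖ ^ n) atTop (𝓝 0) :=
        tendsto_pow_atTop_nhds_zero_of_lt_one (norm_nonneg p) hp
      have := ((h0.comp (tendsto_atTop_mono (fun n => by omega : ∀ n:ℕ, n ≤ 2*n+1) tendsto_id)).mul_const ‖y‖)
      simpa using this
    have hev : ∀ᶠ n : ℕ in atTop, ‖p‖ ^ (2 * n + 1) * ‖y‖ ≤ 1/2 :=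
      hten.eventually (eventually_le_nhds (by norm_num))
    filter_upwards [hev] with n hn
    have hrw : (p ^ (((n:ℤ)+1) ^ 2) * y ^ ((n:ℤ)+1)) = (p ^ ((n:ℤ)^2) * y ^ (n:ℤ)) * (p ^ (2*n+1) * y) := by
      rw [show ((n:ℤ)+1)^2 = (n:ℤ)^2 + (2*(n:ℤ)+1) by ring, zpow_add₀ hp0, zpow_add₀ hy]
      rw [show ((2:ℤ)*(n:ℤ)+1) = ((2*n+1 : ℕ) : ℤ) by push_cast; ring, zpow_natCast]
      simp [zpow_one]
      ring
    have : ‖‖p ^ (((n:ℤ)+1) ^ 2) * y ^ ((n:ℤ)+1)‖‖ = ‖p ^ ((n:ℤ)^2) * y ^ (n:ℤ)‖ * (‖p‖^(2*n+1) * ‖y‖) := by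
      rw [Real.norm_of_nonneg (norm_nonneg _), hrw]
      simp [norm_mul, norm_pow]
    rw [show (((n+1 : ℕ)):ℤ) = (n:ℤ)+1 by push_cast; ring] at *
    rw [this]
    rw [Real.norm_of_nonneg (norm_nonneg _)]
    calc ‖p ^ ((n:ℤ)^2) * y ^ (n:ℤ)‖ * (‖p‖^(2*n+1) * ‖y‖)
        ≤ ‖p ^ ((n:ℤ)^2) * y ^ (n:ℤ)‖ * (1/2) := by
          apply mul_le_mul_of_nonneg_left hn (norm_nonneg _)
      _ = 1/2 * ‖p ^ ((n:ℤ)^2) * y ^ (n:ℤ)‖ := by ring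
  apply Summable.of_nat_of_neg
  · exact key x hx
  · have := key x⁻¹ (inv_ne_zero hx)
    apply this.congr
    intro n
    congr 1
    rw [show (-(n:ℤ))^2 = (n:ℤ)^2 by ring, zpow_neg, inv_zpow]


def gb (Q : ℂ) : ℕ → ℕ → ℂ
  | _, 0 => 1
  | 0, _+1 => 0
  | m+1, k+1 => gb Q m k + Q^(k+1) * gb Q m (k+1)

lemma gb_zero (Q : ℂ) : ∀ m k, m < k → gb Q m k = 0 := by
  intro m
  induction m with
  | zero => intro k hk; match k, hk with | k+1, _ => rfl
  | succ m ih =>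
    intro k hk
    match k, hk with
    | k+1, hk =>
      show gb Q m k + Q^(k+1) * gb Q m (k+1) = 0
      rw [ih k (by omega), ih (k+1) (by omega)]
      ring

lemma choose_two_succ (k : ℕ) : (k+1).choose 2 = k.choose 2 + k := by
  simp [Nat.choose_succ_succ, Nat.choose_one_right, Nat.add_comm]

lemma prod_fac (Q : ℂ) (c k : ℕ) :
    ∏ i ∈ range (k+1), (1 - Q^(c+i)) = (1 - Q^c) * ∏ i ∈ range k, (1 - Q^(c+1+i)) := by
  rw [Finset.prod_range_succ']
  rw [Finset.prod_congr rfl (fun i _ => by rw [show c+(i+1) = c+1+i from by ring])]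
  rw [add_zero]; ring

lemma qbinom (Q : ℂ) (m : ℕ) : ∀ t : ℂ,
    ∏ j ∈ range m, (1 + t * Q ^ j) =
      ∑ k ∈ range (m+1), Q ^ (k.choose 2) * gb Q m k * t ^ k := by
  induction m with
  | zero => intro t; simp [gb]
  | succ m ih =>
    intro t
    rw [Finset.prod_range_succ']
    have h1 : ∏ j ∈ range m, (1 + t * Q ^ (j+1)) =
        ∑ k ∈ range (m+1), Q ^ (k.choose 2) * gb Q m k * (t*Q) ^ k := by
      rw [← ih (t*Q)]; apply Finset.prod_congr rfl; intros; ring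
    rw [h1]
    have h2 : (∑ k ∈ range (m+1), Q ^ (k.choose 2) * gb Q m k * (t*Q) ^ k) * (1 + t * Q ^ 0)
        = (∑ k ∈ range (m+1), Q ^ (k.choose 2 + k) * gb Q m k * t ^ k)
          + (∑ k ∈ range (m+1), Q ^ (k.choose 2 + k) * gb Q m k * t ^ (k+1)) := by
      rw [pow_zero, mul_one, mul_add, mul_one, Finset.sum_mul]
      congr 1
      · apply Finset.sum_congr rfl; intro k _; rw [mul_pow, pow_add]; ring
      · apply Finset.sum_congr rfl; intro k _; rw [mul_pow, pow_add]; ring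
    rw [h2]
    have h3 : (∑ k ∈ range (m+1), Q ^ (k.choose 2 + k) * gb Q m k * t ^ k)
        = (∑ k ∈ range (m+1), Q ^ ((k+1).choose 2 + (k+1)) * gb Q m (k+1) * t ^ (k+1)) + 1 := by
      rw [Finset.sum_range_succ']
      simp only [gb, Nat.choose_zero_right, pow_zero, one_mul, mul_one]
      congr 1
      rw [Finset.sum_range_succ, gb_zero Q m (m+1) (by omega)]
      simp
    rw [h3]
    have h4 : ∑ k ∈ range (m+1+1), Q ^ (k.choose 2) * gb Q (m+1) k * t ^ k
        = (∑ k ∈ range (m+1), Q ^ ((k+1).choose 2) * gb Q (m+1) (k+1) * t ^ (k+1)) + 1 := by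
      rw [Finset.sum_range_succ']
      simp [gb]
    rw [h4]
    have h5 : ∀ k ∈ range (m+1),
        Q ^ ((k+1).choose 2) * gb Q (m+1) (k+1) * t ^ (k+1)
        = Q ^ ((k+1).choose 2 + (k+1)) * gb Q m (k+1) * t ^ (k+1)
          + Q ^ (k.choose 2 + k) * gb Q m k * t ^ (k+1) := by
      intro k _
      show Q ^ ((k+1).choose 2) * (gb Q m k + Q^(k+1) * gb Q m (k+1)) * t ^ (k+1) = _
      rw [choose_two_succ, pow_add, pow_add, pow_add]
      ring
    rw [Finset.sum_congr rfl h5, Finset.sum_add_distrib]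
    ring

-- ratio formula, multiplied out
lemma gb_mul_eq (Q : ℂ) : ∀ m k, k ≤ m →
    gb Q m k * (∏ i ∈ range k, (1 - Q^(i+1))) = ∏ i ∈ range k, (1 - Q^(m-k+1+i)) := by
  intro m
  induction m with
  | zero => intro k hk; interval_cases k; simp [gb]
  | succ m ih =>
    intro k hk
    match k with
    | 0 => simp [gb]
    | k+1 =>
      show (gb Q m k + Q^(k+1) * gb Q m (k+1)) * _ = _
      have hkm : k ≤ m := by omega
      have hsub : m + 1 - (k+1) = m - k := by omega
      rcases Nat.lt_or_ge k m with hlt | hge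
      · -- k+1 ≤ m
        have ih1 := ih k hkm
        have ih2 := ih (k+1) hlt
        have hN2 : (∏ i ∈ range (k+1), (1 - Q^(m-(k+1)+1+i)))
            = (1 - Q^(m-k)) * ∏ i ∈ range k, (1 - Q^(m-k+1+i)) := by
          rw [show m-(k+1)+1 = m-k from by omega, prod_fac, show m-k+1 = m-k+1 from rfl]
        have goalN : (∏ i ∈ range (k+1), (1 - Q^(m+1-(k+1)+1+i)))
            = (∏ i ∈ range k, (1 - Q^(m-k+1+i))) * (1 - Q^(m+1)) := by
          rw [show m+1-(k+1)+1 = m-k+1 from by omega, Finset.prod_range_succ,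
            show m-k+1+k = m+1 from by omega]
      -- common algebra
        rw [goalN, Finset.prod_range_succ, ← mul_assoc]
        have expand : (gb Q m k + Q^(k+1) * gb Q m (k+1)) * (∏ i ∈ range k, (1 - Q^(i+1)))
            * (1 - Q^(k+1))
            = (gb Q m k * ∏ i ∈ range k, (1 - Q^(i+1))) * (1 - Q^(k+1))
              + Q^(k+1) * ((gb Q m (k+1)) * ∏ i ∈ range (k+1), (1 - Q^(i+1))) := by
          rw [Finset.prod_range_succ]; ring
        rw [expand, ih1, ih2, hN2]
        have hpow : Q^(k+1) * Q^(m-k) = Q^(m+1) := by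
          rw [← pow_add]; congr 1; omega
        calc (∏ i ∈ range k, (1 - Q^(m-k+1+i))) * (1 - Q^(k+1))
              + Q^(k+1) * ((1 - Q^(m-k)) * ∏ i ∈ range k, (1 - Q^(m-k+1+i)))
            = (∏ i ∈ range k, (1 - Q^(m-k+1+i))) * (1 - Q^(k+1) + Q^(k+1) - Q^(k+1) * Q^(m-k)) := by
              ring
          _ = (∏ i ∈ range k, (1 - Q^(m-k+1+i))) * (1 - Q^(m+1)) := by rw [hpow]; ring
      · -- k = m
        have hk' : k = m := by omega
        subst hk'
        rw [gb_zero Q k (k+1) (by omega)]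
        have ih1 := ih k le_rfl
        have e0 : k - k = 0 := by omega
        rw [e0] at ih1
        have goalN : (∏ i ∈ range (k+1), (1 - Q^(k+1-(k+1)+1+i)))
            = (∏ i ∈ range k, (1 - Q^(0+1+i))) * (1 - Q^(k+1)) := by
          rw [show k+1-(k+1)+1 = 0+1 from by omega, Finset.prod_range_succ,
            show 0+1+k = k+1 from by omega]
        rw [goalN, ← ih1, Finset.prod_range_succ]
        ring


lemma prod_zpow_sum (p : ℂ) (hp : p ≠ 0) (S : Finset ℕ) (g : ℕ → ℤ) :
    ∏ i ∈ S, p ^ g i = p ^ (∑ i ∈ S, g i) := by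
  classical
  induction S using Finset.cons_induction with
  | empty => simp
  | cons j S hj ih => rw [Finset.prod_cons, Finset.sum_cons, zpow_add₀ hp, ih]

lemma sum_odd_range (m : ℕ) : ∑ j ∈ range m, (2*(j:ℤ)+1) = (m:ℤ)^2 := by
  induction m with
  | zero => simp
  | succ m ih => rw [Finset.sum_range_succ, ih]; push_cast; ring

lemma finite_jtp (p x : ℂ) (hp : p ≠ 0) (hx : x ≠ 0) (m : ℕ) :
    (∏ i ∈ range m, (1 + x * p^(2*i+1))) * (∏ i ∈ range m, (1 + x⁻¹ * p^(2*i+1)))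
    = ∑ k ∈ range (2*m+1), gb (p^2) (m+m) k * (p ^ (((k:ℤ) - m)^2) * x ^ ((k:ℤ) - m)) := by
  have base := qbinom (p^2) (2*m) (x * p ^ ((1:ℤ) - 2*m))
  -- rewrite each factor of LHS of base
  have hterm : ∀ j : ℕ, 1 + (x * p ^ ((1:ℤ) - 2*m)) * (p^2)^j = 1 + x * p ^ (2*(j:ℤ)+1-2*m) := by
    intro j
    congr 1
    rw [← zpow_natCast (p^2) j, ← zpow_natCast p 2, ← zpow_mul, mul_assoc, ← zpow_add₀ hp]
    congr 1
    ring
  rw [Finset.prod_congr rfl (fun j _ => hterm j)] at base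
  -- split the product
  rw [show 2*m = m + m from by ring, Finset.prod_range_add] at base
  have hupper : ∀ i : ℕ, 1 + x * p ^ (2*((m+i:ℕ):ℤ)+1-2*m) = 1 + x * p^(2*i+1) := by
    intro i
    congr 1
    rw [← zpow_natCast p (2*i+1)]
    congr 1
    push_cast; ring
  rw [Finset.prod_congr rfl (fun i _ => hupper i)] at base
  have hlowerf : ∀ j : ℕ, j < m → 1 + x * p ^ (2*(((m-1-j:ℕ)):ℤ)+1-2*m)
      = (1 + x⁻¹ * p^(2*j+1)) * (x * p ^ (-(2*(j:ℤ)+1))) := by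
    intro j hj
    have hc : (((m-1-j:ℕ)):ℤ) = (m:ℤ)-1-j := by omega
    rw [hc, show 2*((m:ℤ)-1-j)+1-2*m = -(2*(j:ℤ)+1) from by ring]
    have h1 : x⁻¹ * p^(2*j+1) * (x * p ^ (-(2*(j:ℤ)+1))) = 1 := by
      rw [← zpow_natCast p (2*j+1), show (((2*j+1 : ℕ)):ℤ) = 2*(j:ℤ)+1 from by push_cast; ring]
      rw [zpow_neg]
      field_simp
    calc 1 + x * p ^ (-(2*(j:ℤ)+1)) = x * p ^ (-(2*(j:ℤ)+1)) + x⁻¹ * p^(2*j+1) * (x * p ^ (-(2*(j:ℤ)+1))) := by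
          rw [h1]; ring
      _ = (1 + x⁻¹ * p^(2*j+1)) * (x * p ^ (-(2*(j:ℤ)+1))) := by ring
  have hlower : ∏ j ∈ range m, (1 + x * p ^ (2*((j:ℕ):ℤ)+1-2*m))
      = (∏ j ∈ range m, (1 + x⁻¹ * p^(2*j+1))) * (x^(m:ℕ) * p ^ (-((m:ℤ)^2))) := by
    rw [← Finset.prod_range_reflect]
    rw [Finset.prod_congr rfl (fun j hj => hlowerf j (Finset.mem_range.mp hj))]
    rw [Finset.prod_mul_distrib, Finset.prod_mul_distrib]
    rw [prod_zpow_sum p hp]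
    congr 2
    · exact Finset.prod_const x ▸ (by simp)
    · rw [show (∑ j ∈ range m, -(2*(j:ℤ)+1)) = -((∑ j ∈ range m, (2*(j:ℤ)+1))) from by
        rw [Finset.sum_neg_distrib], sum_odd_range]
  rw [hlower] at base
  -- rewrite RHS of base
  have hrhs : ∀ k : ℕ, (p^2) ^ (k.choose 2) * gb (p^2) (m+m) k * (x * p ^ ((1:ℤ) - 2*m)) ^ k
      = (gb (p^2) (m+m) k * (p ^ (((k:ℤ) - m)^2) * x ^ ((k:ℤ) - m))) * (x^(m:ℕ) * p ^ (-((m:ℤ)^2))) := by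
    intro k
    have e1 : ((p^2) : ℂ) ^ (k.choose 2) = p ^ ((k:ℤ)^2 - k) := by
      rw [← zpow_natCast (p^2) (k.choose 2), ← zpow_natCast p 2, ← zpow_mul]
      congr 1
      have : (k.choose 2) * 2 = k * (k-1) := Nat.choose_two_right k ▸ Nat.div_mul_cancel (Nat.even_mul_pred_self k).two_dvd
      rcases Nat.eq_zero_or_pos k with hk | hk
      · subst hk; simp
      · have hk1 : 1 ≤ k := hk
        zify [hk1] at this
        push_cast
        linear_combination this
    have e2 : (x * p ^ ((1:ℤ) - 2*m)) ^ k = x ^ (k:ℤ) * p ^ ((k:ℤ) * (1 - 2*m)) := by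
      rw [mul_pow, ← zpow_natCast x k, ← zpow_natCast (p ^ ((1:ℤ) - 2*m)) k, ← zpow_mul]
      congr 1
      ring
    rw [e1, e2, show (x:ℂ)^(m:ℕ) = x^((m:ℕ):ℤ) from (zpow_natCast x m).symm]
    have ex : x ^ ((k:ℤ) - m) * x ^ ((m:ℕ):ℤ) = x ^ (k:ℤ) := by
      rw [← zpow_add₀ hx]; congr 1; ring
    have ep : p ^ (((k:ℤ) - m)^2) * p ^ (-((m:ℤ)^2)) = p ^ (((k:ℤ)^2 - k) + ((k:ℤ)*(1-2*m))) := by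
      rw [← zpow_add₀ hp]; congr 1; ring
    calc p ^ ((k:ℤ)^2 - k) * gb (p^2) (m+m) k * (x ^ (k:ℤ) * p ^ ((k:ℤ) * (1 - 2*m)))
        = gb (p^2) (m+m) k * (p ^ (((k:ℤ)^2 - k) + ((k:ℤ)*(1-2*m))) * x ^ (k:ℤ)) := by
          rw [zpow_add₀ hp]; ring
      _ = gb (p^2) (m+m) k * ((p ^ (((k:ℤ) - m)^2) * p ^ (-((m:ℤ)^2))) * (x ^ ((k:ℤ) - m) * x ^ ((m:ℕ):ℤ))) := by
          rw [ex, ep]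
      _ = _ := by ring
  rw [Finset.sum_congr rfl (fun k _ => hrhs k), ← Finset.sum_mul] at base
  -- cancel the common factor
  have hc : (x^(m:ℕ) * p ^ (-((m:ℤ)^2))) ≠ 0 :=
    mul_ne_zero (pow_ne_zero _ hx) (zpow_ne_zero _ hp)
  have base2 : ((∏ i ∈ range m, (1 + x * p^(2*i+1))) * (∏ i ∈ range m, (1 + x⁻¹ * p^(2*i+1))))
      * (x^(m:ℕ) * p ^ (-((m:ℤ)^2)))
      = (∑ k ∈ range (m+m+1), gb (p^2) (m+m) k * (p ^ (((k:ℤ) - m)^2) * x ^ ((k:ℤ) - m)))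
      * (x^(m:ℕ) * p ^ (-((m:ℤ)^2))) := by
    rw [← base]; ring
  have hfin := mul_right_cancel₀ hc base2
  rw [two_mul m]
  exact hfin


-- placeholders for already-proven material
lemma multipliable_one_add_mul (c p : ℂ) (hp : ‖p‖ < 1) (a b : ℕ) (ha : 0 < a) :
    Multipliable fun i : ℕ => 1 + c * p ^ (a*i+b) :=
  multipliable_one_add (summable_aux c p hp a b ha)

lemma multipliable_one_sub_mul (c p : ℂ) (hp : ‖p‖ < 1) (a b : ℕ) (ha : 0 < a) :
    Multipliable fun i : ℕ => 1 - c * p ^ (a*i+b) := by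
  have := multipliable_one_add_mul (-c) p hp a b ha
  apply this.congr
  intro i; ring

section JTP
variable {p x : ℂ} (hp1 : ‖p‖ < 1) (hp0 : p ≠ 0) (hx : x ≠ 0)

theorem jtp (hp1 : ‖p‖ < 1) (hp0 : p ≠ 0) (hx : x ≠ 0) :
    ∑' l : ℤ, p^(l^2) * x^l
      = (∏' i:ℕ, (1 - (p^2)^(i+1))) * ((∏' i:ℕ, (1 + x*p^(2*i+1))) * (∏' i:ℕ, (1 + x⁻¹*p^(2*i+1)))) := by
  set Q : ℂ := p^2 with hQdef
  have hQ1 : ‖Q‖ < 1 := by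
    rw [hQdef, norm_pow]
    nlinarith [norm_nonneg p]
  have hQ0 : Q ≠ 0 := pow_ne_zero _ hp0
  have sQ : Summable (fun i : ℕ => ‖Q‖^(i+1)) := by
    have := (summable_geometric_of_lt_one (norm_nonneg Q) hQ1).mul_right ‖Q‖
    apply this.congr
    intro i; rw [pow_succ]
  set S : ℝ := ∑' i : ℕ, ‖Q‖^(i+1) with hSdef
  have hS0 : 0 ≤ S := tsum_nonneg (fun i => pow_nonneg (norm_nonneg _) _)
  set δ : ℝ := Real.exp (-(S/(1-‖Q‖))) with hδdef
  have hδ0 : 0 < δ := Real.exp_pos _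
  -- the Euler factor
  have multE : Multipliable (fun i : ℕ => 1 - Q^(i+1)) := by
    have := multipliable_one_sub_mul 1 Q hQ1 1 1 one_pos
    apply this.congr
    intro i; rw [one_mul, one_mul]
  set E : ℂ := ∏' i : ℕ, (1 - Q^(i+1)) with hEdef
  have hDtend : Tendsto (fun k : ℕ => ∏ i ∈ range k, (1 - Q^(i+1))) atTop (𝓝 E) :=
    multE.hasProd.tendsto_prod_nat
  -- lower bound for partial denominators
  have hQpow_le : ∀ i : ℕ, ‖Q‖^(i+1) ≤ ‖Q‖ := by
    intro i
    calc ‖Q‖^(i+1) ≤ ‖Q‖^1 := pow_le_pow_of_le_one (norm_nonneg _) hQ1.le (by omega)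
      _ = ‖Q‖ := pow_one _
  have hpartial_lower : ∀ k : ℕ, δ ≤ ∏ i ∈ range k, ‖1 - Q^(i+1)‖ := by
    intro k
    have h1 : Real.exp (-((∑ i ∈ range k, ‖Q‖^(i+1)) / (1-‖Q‖)))
        ≤ ∏ i ∈ range k, (1 - ‖Q‖^(i+1)) :=
      prod_one_sub_ge _ _ _ hQ1 (fun i => pow_nonneg (norm_nonneg _) _) hQpow_le
    have h2 : ∏ i ∈ range k, (1 - ‖Q‖^(i+1)) ≤ ∏ i ∈ range k, ‖1 - Q^(i+1)‖ := by
      apply Finset.prod_le_prod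
      · intro i _
        nlinarith [hQpow_le i, hQ1]
      · intro i _
        have := norm_sub_norm_le (1:ℂ) (Q^(i+1))
        simpa [norm_pow] using this
    refine le_trans ?_ (le_trans h1 h2)
    rw [hδdef]
    apply Real.exp_le_exp.2
    have : (∑ i ∈ range k, ‖Q‖^(i+1)) ≤ S := sQ.sum_le_tsum _ (fun i _ => pow_nonneg (norm_nonneg _) _)
    have h1Q : 0 < 1 - ‖Q‖ := by linarith
    rw [neg_le_neg_iff]
    gcongr
  -- norm of E from below
  have hEnorm : δ ≤ ‖E‖ := by
    have ht : Tendsto (fun k => ‖∏ i ∈ range k, (1 - Q^(i+1))‖) atTop (𝓝 ‖E‖) := hDtend.norm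
    apply ge_of_tendsto ht
    filter_upwards with k
    rw [norm_prod]
    exact hpartial_lower k
  have hE0 : E ≠ 0 := by
    intro h
    rw [h, norm_zero] at hEnorm
    linarith
  -- uniform bound on Gaussian binomials
  have gb_bound : ∀ m k, k ≤ m → ‖gb Q m k‖ ≤ Real.exp S / δ := by
    intro m k hk
    have h := gb_mul_eq Q m k hk
    have hN : ‖∏ i ∈ range k, (1 - Q^(m-k+1+i))‖ ≤ Real.exp S := by
      rw [norm_prod]
      calc ∏ i ∈ range k, ‖1 - Q^(m-k+1+i)‖
          ≤ ∏ i ∈ range k, (1 + ‖Q‖^(m-k+1+i)) := by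
            apply Finset.prod_le_prod (fun i _ => norm_nonneg _)
            intro i _
            have := norm_sub_le (1:ℂ) (Q^(m-k+1+i))
            simpa [norm_pow] using this
        _ ≤ ∏ i ∈ range k, Real.exp (‖Q‖^(m-k+1+i)) := by
            apply Finset.prod_le_prod
            · intro i _; positivity
            · intro i _; linarith [Real.add_one_le_exp (‖Q‖^(m-k+1+i))]
        _ = Real.exp (∑ i ∈ range k, ‖Q‖^(m-k+1+i)) := (Real.exp_sum _ _).symm
        _ ≤ Real.exp S := by
            apply Real.exp_le_exp.2
            calc ∑ i ∈ range k, ‖Q‖^(m-k+1+i) ≤ ∑ i ∈ range k, ‖Q‖^(i+1) := by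
                  apply Finset.sum_le_sum
                  intro i _
                  apply pow_le_pow_of_le_one (norm_nonneg _) hQ1.le
                  omega
              _ ≤ S := sQ.sum_le_tsum _ (fun i _ => pow_nonneg (norm_nonneg _) _)
    rw [le_div_iff₀ hδ0]
    calc ‖gb Q m k‖ * δ ≤ ‖gb Q m k‖ * ∏ i ∈ range k, ‖1 - Q^(i+1)‖ :=
          mul_le_mul_of_nonneg_left (hpartial_lower k) (norm_nonneg _)
      _ = ‖gb Q m k * ∏ i ∈ range k, (1 - Q^(i+1))‖ := by rw [norm_mul, norm_prod]
      _ = ‖∏ i ∈ range k, (1 - Q^(m-k+1+i))‖ := by rw [h]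
      _ ≤ Real.exp S := hN
  -- index functions tend to infinity
  have hkt : ∀ l : ℤ, Tendsto (fun m : ℕ => ((m:ℤ)+l).toNat) atTop atTop := by
    intro l
    apply tendsto_atTop_atTop.2
    intro b
    exact ⟨b + l.natAbs, fun m hm => by omega⟩
  -- pointwise limit of the Gaussian binomials
  have hgbt : ∀ l : ℤ, Tendsto (fun m : ℕ => gb Q (2*m) (((m:ℤ)+l).toNat)) atTop (𝓝 E⁻¹) := by
    intro l
    have hDt : Tendsto (fun m : ℕ => ∏ i ∈ range (((m:ℤ)+l).toNat), (1 - Q^(i+1))) atTop (𝓝 E) :=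
      hDtend.comp (hkt l)
    have hNt : Tendsto (fun m : ℕ =>
        ∏ i ∈ range (((m:ℤ)+l).toNat), (1 - Q^(2*m - ((m:ℤ)+l).toNat + 1 + i))) atTop (𝓝 1) := by
      have hup : Tendsto (fun m : ℕ => Real.exp (‖Q‖^(((m:ℤ)+(-l)).toNat) * S) - 1) atTop (𝓝 0) := by
        have h1 : Tendsto (fun m : ℕ => ‖Q‖^(((m:ℤ)+(-l)).toNat)) atTop (𝓝 0) :=
          (tendsto_pow_atTop_nhds_zero_of_lt_one (norm_nonneg _) hQ1).comp (hkt (-l))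
        have h2 : Tendsto (fun m : ℕ => ‖Q‖^(((m:ℤ)+(-l)).toNat) * S) atTop (𝓝 0) := by
          have := h1.mul_const S
          simpa using this
        have h3 := (Real.continuous_exp.tendsto 0).comp h2
        simp only [Function.comp, Real.exp_zero] at h3
        have := h3.sub_const 1
        simpa using this
      have hbnd : ∀ᶠ m : ℕ in atTop,
          ‖(∏ i ∈ range (((m:ℤ)+l).toNat), (1 - Q^(2*m - ((m:ℤ)+l).toNat + 1 + i))) - 1‖
          ≤ Real.exp (‖Q‖^(((m:ℤ)+(-l)).toNat) * S) - 1 := by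
        filter_upwards [Filter.eventually_ge_atTop l.natAbs] with m hm
        have hcongr : ∀ i ∈ range (((m:ℤ)+l).toNat),
            (1 - Q^(2*m - ((m:ℤ)+l).toNat + 1 + i)) = 1 + (-(Q^(2*m - ((m:ℤ)+l).toNat + 1 + i))) := by
          intro i _; ring
        rw [Finset.prod_congr rfl hcongr]
        refine le_trans (_root_.norm_prod_one_add_sub_one_le _ _) ?_
        have hsmall : (∑ i ∈ range (((m:ℤ)+l).toNat), ‖-(Q^(2*m - ((m:ℤ)+l).toNat + 1 + i))‖)
            ≤ ‖Q‖^(((m:ℤ)+(-l)).toNat) * S := by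
          have hterm : ∀ i ∈ range (((m:ℤ)+l).toNat),
              ‖-(Q^(2*m - ((m:ℤ)+l).toNat + 1 + i))‖ ≤ ‖Q‖^(((m:ℤ)+(-l)).toNat) * ‖Q‖^(i+1) := by
            intro i _
            rw [norm_neg, norm_pow, ← pow_add]
            apply pow_le_pow_of_le_one (norm_nonneg _) hQ1.le
            omega
          calc _ ≤ ∑ i ∈ range (((m:ℤ)+l).toNat), ‖Q‖^(((m:ℤ)+(-l)).toNat) * ‖Q‖^(i+1) :=
                Finset.sum_le_sum hterm
            _ = ‖Q‖^(((m:ℤ)+(-l)).toNat) * ∑ i ∈ range (((m:ℤ)+l).toNat), ‖Q‖^(i+1) := by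
                rw [Finset.mul_sum]
            _ ≤ ‖Q‖^(((m:ℤ)+(-l)).toNat) * S := by
                apply mul_le_mul_of_nonneg_left _ (pow_nonneg (norm_nonneg _) _)
                exact sQ.sum_le_tsum _ (fun i _ => pow_nonneg (norm_nonneg _) _)
        have := Real.exp_le_exp.2 hsmall
        linarith
      have hz : Tendsto (fun m : ℕ =>
          (∏ i ∈ range (((m:ℤ)+l).toNat), (1 - Q^(2*m - ((m:ℤ)+l).toNat + 1 + i))) - 1) atTop (𝓝 0) :=
        squeeze_zero_norm' hbnd hup
      have hz1 := hz.add_const 1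
      simpa using hz1
    have hdiv := hNt.div hDt hE0
    rw [show (1:ℂ)/E = E⁻¹ from one_div E] at hdiv
    apply hdiv.congr'
    filter_upwards [Filter.eventually_ge_atTop l.natAbs] with m hm
    have hk2m : ((m:ℤ)+l).toNat ≤ 2*m := by omega
    have h := gb_mul_eq Q (2*m) (((m:ℤ)+l).toNat) hk2m
    have hDne : (∏ i ∈ range (((m:ℤ)+l).toNat), (1 - Q^(i+1))) ≠ 0 := by
      intro h0
      have := hpartial_lower (((m:ℤ)+l).toNat)
      rw [← norm_prod, h0, norm_zero] at this
      linarith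
    rw [Pi.div_apply]
    field_simp
    linear_combination -h
  -- dominated convergence setup
  set c : ℤ → ℂ := fun l => p^(l^2) * x^l with hcdef
  set F : ℕ → ℤ → ℂ := fun m l =>
    if l.natAbs ≤ m then gb Q (2*m) (((m:ℤ)+l).toNat) * c l else 0 with hFdef
  have hpoint : ∀ l : ℤ, Tendsto (fun m => F m l) atTop (𝓝 (E⁻¹ * c l)) := by
    intro l
    apply ((hgbt l).mul_const (c l)).congr'
    filter_upwards [Filter.eventually_ge_atTop l.natAbs] with m hm
    rw [hFdef]
    simp only [if_pos hm]
  have hbound : ∀ m : ℕ, ∀ l : ℤ, ‖F m l‖ ≤ (Real.exp S / δ) * ‖c l‖ := by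
    intro m l
    rw [hFdef]
    by_cases hml : l.natAbs ≤ m
    · simp only [if_pos hml]
      rw [norm_mul]
      apply mul_le_mul_of_nonneg_right _ (norm_nonneg _)
      exact gb_bound (2*m) (((m:ℤ)+l).toNat) (by omega)
    · simp only [if_neg hml, norm_zero]
      positivity
  have hsum_bound : Summable (fun l : ℤ => (Real.exp S / δ) * ‖c l‖) :=
    (summable_theta_bound p x hp1 hp0 hx).mul_left _
  have htsum : Tendsto (fun m => ∑' l : ℤ, F m l) atTop (𝓝 (∑' l : ℤ, E⁻¹ * c l)) :=
    tendsto_tsum_of_dominated_convergence hsum_bound hpoint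
      (Filter.Eventually.of_forall hbound)
  -- identify the tsum with the finite sum
  have hfin : ∀ m : ℕ, ∑' l : ℤ, F m l
      = ∑ k ∈ range (2*m+1), gb Q (2*m) k * (p ^ (((k:ℤ) - m)^2) * x ^ ((k:ℤ) - m)) := by
    intro m
    have emb : Function.Injective (fun k : ℕ => (k:ℤ) - m) := by
      intro a b hab
      simp only at hab
      omega
    have hsupp : ∀ l : ℤ, l ∉ Finset.map ⟨fun k : ℕ => (k:ℤ) - m, emb⟩ (range (2*m+1)) → F m l = 0 := by
      intro l hl
      rw [hFdef]
      simp only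
      rw [if_neg]
      intro hml
      apply hl
      rw [Finset.mem_map]
      refine ⟨(l + m).toNat, Finset.mem_range.2 (by omega), ?_⟩
      simp only [Function.Embedding.coeFn_mk]
      omega
    rw [tsum_eq_sum hsupp, Finset.sum_map]
    apply Finset.sum_congr rfl
    intro k hk
    rw [Finset.mem_range] at hk
    rw [hFdef]
    simp only [Function.Embedding.coeFn_mk]
    rw [if_pos (by omega : ((k:ℤ) - m).natAbs ≤ m)]
    rw [show ((m:ℤ) + ((k:ℤ) - m)).toNat = k from by omega]
  -- limits of the products
  have multA : Multipliable (fun i : ℕ => 1 + x * p^(2*i+1)) :=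
    multipliable_one_add_mul x p hp1 2 1 two_pos
  have multB : Multipliable (fun i : ℕ => 1 + x⁻¹ * p^(2*i+1)) :=
    multipliable_one_add_mul x⁻¹ p hp1 2 1 two_pos
  have hL : Tendsto (fun m : ℕ => (∏ i ∈ range m, (1 + x * p^(2*i+1)))
      * (∏ i ∈ range m, (1 + x⁻¹ * p^(2*i+1)))) atTop
      (𝓝 ((∏' i:ℕ, (1 + x*p^(2*i+1))) * (∏' i:ℕ, (1 + x⁻¹*p^(2*i+1))))) :=
    (multA.hasProd.tendsto_prod_nat).mul (multB.hasProd.tendsto_prod_nat)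
  have hL2 : Tendsto (fun m : ℕ => ∑' l : ℤ, F m l) atTop
      (𝓝 ((∏' i:ℕ, (1 + x*p^(2*i+1))) * (∏' i:ℕ, (1 + x⁻¹*p^(2*i+1))))) := by
    apply hL.congr
    intro m
    rw [finite_jtp p x hp0 hx m, hfin m, hQdef, ← two_mul m]
  have huniq := tendsto_nhds_unique hL2 htsum
  have htsum_eq : ∑' l : ℤ, E⁻¹ * c l = E⁻¹ * ∑' l : ℤ, c l := tsum_mul_left
  rw [htsum_eq] at huniq
  rw [hcdef] at huniq
  calc ∑' l : ℤ, p^(l^2) * x^l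
      = E * (E⁻¹ * ∑' l : ℤ, p^(l^2) * x^l) := by
        field_simp
    _ = E * ((∏' i:ℕ, (1 + x*p^(2*i+1))) * (∏' i:ℕ, (1 + x⁻¹*p^(2*i+1)))) := by rw [← huniq]
    _ = _ := by rw [hEdef]
end JTP


lemma jTheta00_eq (σ z : ℂ) :
    jTheta 0 0 σ z = ∑' n : ℤ, (Complex.exp (π*I*σ))^(n^2) * (Complex.exp (2*π*I*z))^n := by
  unfold jTheta
  apply tsum_congr
  intro n
  simp only [← Complex.exp_int_mul, ← Complex.exp_add]
  congr 1
  push_cast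
  ring

lemma jTheta01_eq (σ z : ℂ) :
    jTheta 0 1 σ z = ∑' n : ℤ, (Complex.exp (π*I*σ))^(n^2) * (Complex.exp (π*I) * Complex.exp (2*π*I*z))^n := by
  unfold jTheta
  apply tsum_congr
  intro n
  simp only [← Complex.exp_int_mul, ← Complex.exp_add]
  congr 1
  push_cast
  ring

lemma jTheta10_eq (σ z : ℂ) :
    jTheta 1 0 σ z = Complex.exp (π*I*σ/4) * Complex.exp (π*I*z) *
      ∑' n : ℤ, (Complex.exp (π*I*σ))^(n^2) * (Complex.exp (π*I*σ) * Complex.exp (2*π*I*z))^n := by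
  unfold jTheta
  rw [← tsum_mul_left]
  apply tsum_congr
  intro n
  simp only [← Complex.exp_int_mul, ← Complex.exp_add]
  congr 1
  push_cast
  ring

lemma jTheta11_eq (σ z : ℂ) :
    jTheta 1 1 σ z = Complex.exp (π*I/2) * Complex.exp (π*I*σ/4) * Complex.exp (π*I*z) *
      ∑' n : ℤ, (Complex.exp (π*I*σ))^(n^2) *
        (Complex.exp (π*I) * (Complex.exp (π*I*σ) * Complex.exp (2*π*I*z)))^n := by
  unfold jTheta
  rw [← tsum_mul_left]
  apply tsum_congr
  intro n
  simp only [← Complex.exp_int_mul, ← Complex.exp_add]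
  congr 1
  push_cast
  ring



theorem theta_dup (σ z : ℂ) (hσ : 0 < σ.im) :
    dedekindEta σ ^ 3 * jTheta 1 1 σ (2*z)
      = jTheta 0 0 σ z * jTheta 0 1 σ z * jTheta 1 0 σ z * jTheta 1 1 σ z := by
  have hP1 : ‖Complex.exp (π*I*σ)‖ < 1 := by
    rw [Complex.norm_exp]
    rw [Real.exp_lt_one_iff]
    have : (π*I*σ).re = -(Real.pi * σ.im) := by
      simp [Complex.mul_re, Complex.mul_im]
    rw [this]
    have := Real.pi_pos
    nlinarith
  have hP0 : Complex.exp (π*I*σ) ≠ 0 := Complex.exp_ne_zero _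
  have hX0 : Complex.exp (2*π*I*z) ≠ 0 := Complex.exp_ne_zero _
  have hEpi : Complex.exp (π*I) ≠ 0 := Complex.exp_ne_zero _
  -- eta in product form
  have eta_eq : dedekindEta σ = Complex.exp (π*I*σ/12) *
      ∏' i:ℕ, (1 - (Complex.exp (π*I*σ)^2)^(i+1)) := by
    unfold dedekindEta
    congr 1
    apply tprod_congr
    intro i
    rw [show Complex.exp (π*I*σ)^2 = Complex.exp (2*π*I*σ) from by
      rw [← Complex.exp_nat_mul]; congr 1; push_cast; ring]
  rw [eta_eq, jTheta00_eq, jTheta01_eq, jTheta10_eq, jTheta11_eq σ z, jTheta11_eq σ (2*z)]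
  rw [show π*I*(2*z) = 2*π*I*z from by ring]
  simp only [show Complex.exp (2*π*I*(2*z)) = Complex.exp (2*π*I*z) * Complex.exp (2*π*I*z) from by
    rw [← Complex.exp_add]; congr 1; ring]
  set P : ℂ := Complex.exp (π*I*σ) with hPdef
  set X : ℂ := Complex.exp (2*π*I*z) with hXdef
  set Eπ : ℂ := Complex.exp (π*I) with hEπdef
  -- apply the triple product five times
  rw [jtp hP1 hP0 hX0,
    jtp hP1 hP0 (mul_ne_zero hEpi hX0),
    jtp hP1 hP0 (mul_ne_zero hP0 hX0),
    jtp hP1 hP0 (mul_ne_zero hEpi (mul_ne_zero hP0 hX0)),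
    jtp hP1 hP0 (mul_ne_zero hEpi (mul_ne_zero hP0 (mul_ne_zero hX0 hX0)))]
  -- canonicalize the ten tprods
  have hm1 : Eπ = -1 := Complex.exp_pi_mul_I
  have c01A : (∏' i:ℕ, (1 + (Eπ * X) * P^(2*i+1))) = ∏' i:ℕ, (1 - X * P^(2*i+1)) := by
    apply tprod_congr; intro i; rw [hm1]; ring
  have c01B : (∏' i:ℕ, (1 + (Eπ * X)⁻¹ * P^(2*i+1))) = ∏' i:ℕ, (1 - X⁻¹ * P^(2*i+1)) := by
    apply tprod_congr; intro i; rw [hm1, mul_inv, inv_neg, inv_one]; ring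
  have c10A : (∏' i:ℕ, (1 + (P * X) * P^(2*i+1))) = ∏' i:ℕ, (1 + X * P^(2*i+2)) := by
    apply tprod_congr; intro i
    rw [show P^(2*i+2) = P^(2*i+1) * P from by rw [← pow_succ]]
    ring
  have c10B : (∏' i:ℕ, (1 + (P * X)⁻¹ * P^(2*i+1))) = ∏' i:ℕ, (1 + X⁻¹ * P^(2*i)) := by
    apply tprod_congr; intro i
    rw [show P^(2*i+1) = P^(2*i) * P from by rw [← pow_succ]]
    rw [mul_inv]
    field_simp
  have c11A : (∏' i:ℕ, (1 + (Eπ * (P * X)) * P^(2*i+1))) = ∏' i:ℕ, (1 - X * P^(2*i+2)) := by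
    apply tprod_congr; intro i
    rw [hm1, show P^(2*i+2) = P^(2*i+1) * P from by rw [← pow_succ]]
    ring
  have c11B : (∏' i:ℕ, (1 + (Eπ * (P * X))⁻¹ * P^(2*i+1))) = ∏' i:ℕ, (1 - X⁻¹ * P^(2*i)) := by
    apply tprod_congr; intro i
    rw [hm1, show P^(2*i+1) = P^(2*i) * P from by rw [← pow_succ]]
    rw [mul_inv, mul_inv, inv_neg, inv_one]
    field_simp
    ring
  have cLA : (∏' i:ℕ, (1 + (Eπ * (P * (X * X))) * P^(2*i+1))) = ∏' i:ℕ, (1 - X^2 * P^(2*i+2)) := by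
    apply tprod_congr; intro i
    rw [hm1, show P^(2*i+2) = P^(2*i+1) * P from by rw [← pow_succ]]
    ring
  have cLB : (∏' i:ℕ, (1 + (Eπ * (P * (X * X)))⁻¹ * P^(2*i+1))) = ∏' i:ℕ, (1 - (X^2)⁻¹ * P^(2*i)) := by
    apply tprod_congr; intro i
    rw [hm1, show P^(2*i+1) = P^(2*i) * P from by rw [← pow_succ]]
    rw [mul_inv, mul_inv, mul_inv, inv_neg, inv_one]
    field_simp
    ring
  rw [c01A, c01B, c10A, c10B, c11A, c11B, cLA, cLB]
  -- multipliability of the canonical families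
  have m1 : Multipliable fun i:ℕ => 1 + X * P^(2*i+1) := multipliable_one_add_mul X P hP1 2 1 two_pos
  have m2 : Multipliable fun i:ℕ => 1 - X * P^(2*i+1) := multipliable_one_sub_mul X P hP1 2 1 two_pos
  have m3 : Multipliable fun i:ℕ => 1 + X⁻¹ * P^(2*i+1) := multipliable_one_add_mul X⁻¹ P hP1 2 1 two_pos
  have m4 : Multipliable fun i:ℕ => 1 - X⁻¹ * P^(2*i+1) := multipliable_one_sub_mul X⁻¹ P hP1 2 1 two_pos
  have m5 : Multipliable fun i:ℕ => 1 + X * P^(2*i+2) := multipliable_one_add_mul X P hP1 2 2 two_pos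
  have m6 : Multipliable fun i:ℕ => 1 - X * P^(2*i+2) := multipliable_one_sub_mul X P hP1 2 2 two_pos
  have m7 : Multipliable fun i:ℕ => 1 + X⁻¹ * P^(2*i) := by
    have := multipliable_one_add_mul X⁻¹ P hP1 2 0 two_pos
    apply this.congr; intro i; norm_num
  have m8 : Multipliable fun i:ℕ => 1 - X⁻¹ * P^(2*i) := by
    have := multipliable_one_sub_mul X⁻¹ P hP1 2 0 two_pos
    apply this.congr; intro i; norm_num
  -- pairings
  have hp4 : ∀ i:ℕ, P^(2*i+1) * P^(2*i+1) = P^(4*i+2) := by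
    intro i; rw [← pow_add]; congr 1; ring
  have hp4' : ∀ i:ℕ, P^(2*i+2) * P^(2*i+2) = P^(4*i+4) := by
    intro i; rw [← pow_add]; congr 1; ring
  have hp4'' : ∀ i:ℕ, P^(2*i) * P^(2*i) = P^(4*i) := by
    intro i; rw [← pow_add]; congr 1; ring
  have pair1 : (∏' i:ℕ, (1 + X * P^(2*i+1))) * (∏' i:ℕ, (1 - X * P^(2*i+1)))
      = ∏' i:ℕ, (1 - X^2 * P^(4*i+2)) := by
    rw [← Multipliable.tprod_mul m1 m2]
    apply tprod_congr; intro i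
    rw [← hp4 i]; ring
  have pair2 : (∏' i:ℕ, (1 + X⁻¹ * P^(2*i+1))) * (∏' i:ℕ, (1 - X⁻¹ * P^(2*i+1)))
      = ∏' i:ℕ, (1 - (X^2)⁻¹ * P^(4*i+2)) := by
    rw [← Multipliable.tprod_mul m3 m4]
    apply tprod_congr; intro i
    rw [← hp4 i, show ((X^2)⁻¹ : ℂ) = X⁻¹ * X⁻¹ from by rw [← mul_inv]; congr 1; ring]
    ring
  have pair3 : (∏' i:ℕ, (1 + X * P^(2*i+2))) * (∏' i:ℕ, (1 - X * P^(2*i+2)))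
      = ∏' i:ℕ, (1 - X^2 * P^(4*i+4)) := by
    rw [← Multipliable.tprod_mul m5 m6]
    apply tprod_congr; intro i
    rw [← hp4' i]; ring
  have pair4 : (∏' i:ℕ, (1 + X⁻¹ * P^(2*i))) * (∏' i:ℕ, (1 - X⁻¹ * P^(2*i)))
      = ∏' i:ℕ, (1 - (X^2)⁻¹ * P^(4*i)) := by
    rw [← Multipliable.tprod_mul m7 m8]
    apply tprod_congr; intro i
    rw [← hp4'' i, show ((X^2)⁻¹ : ℂ) = X⁻¹ * X⁻¹ from by rw [← mul_inv]; congr 1; ring]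
    ring
  -- even-odd merges
  have merge1 : (∏' i:ℕ, (1 - X^2 * P^(4*i+2))) * (∏' i:ℕ, (1 - X^2 * P^(4*i+4)))
      = ∏' i:ℕ, (1 - X^2 * P^(2*i+2)) := by
    have he : Multipliable fun k:ℕ => 1 - X^2 * P^(2*(2*k)+2) := by
      have := multipliable_one_sub_mul (X^2) P hP1 4 2 (by norm_num)
      apply this.congr; intro i; congr 2; ring
    have ho : Multipliable fun k:ℕ => 1 - X^2 * P^(2*(2*k+1)+2) := by
      have := multipliable_one_sub_mul (X^2) P hP1 4 4 (by norm_num)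
      apply this.congr; intro i; congr 2; ring
    have := tprod_even_mul_odd he ho (f := fun i:ℕ => 1 - X^2 * P^(2*i+2))
    rw [← this]
    congr 1
    · apply tprod_congr; intro i; congr 2; ring
    · apply tprod_congr; intro i; congr 2; ring
  have merge2 : (∏' i:ℕ, (1 - (X^2)⁻¹ * P^(4*i))) * (∏' i:ℕ, (1 - (X^2)⁻¹ * P^(4*i+2)))
      = ∏' i:ℕ, (1 - (X^2)⁻¹ * P^(2*i)) := by
    have he : Multipliable fun k:ℕ => 1 - (X^2)⁻¹ * P^(2*(2*k)) := by
      have := multipliable_one_sub_mul ((X^2)⁻¹) P hP1 4 0 (by norm_num)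
      apply this.congr; intro i; congr 2; ring
    have ho : Multipliable fun k:ℕ => 1 - (X^2)⁻¹ * P^(2*(2*k+1)) := by
      have := multipliable_one_sub_mul ((X^2)⁻¹) P hP1 4 2 (by norm_num)
      apply this.congr; intro i; congr 2; ring
    have := tprod_even_mul_odd he ho (f := fun i:ℕ => 1 - (X^2)⁻¹ * P^(2*i))
    rw [← this]
    congr 1
    · apply tprod_congr; intro i; congr 2; ring
    · apply tprod_congr; intro i; congr 2; ring
  -- prefactor identity
  have hpre : Complex.exp (π*I*σ/12)^3 = Complex.exp (π*I*σ/4) := by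
    rw [← Complex.exp_nat_mul]
    congr 1
    push_cast
    ring
  have hs2 : Complex.exp (π*I*z) * Complex.exp (π*I*z) = X := by
    rw [← Complex.exp_add, hXdef]
    congr 1
    ring
  -- final assembly
  rw [mul_pow, hpre]
  rw [← pair1] at merge1
  rw [← pair4] at merge2
  calc Complex.exp (π*I*σ/4) * (∏' i:ℕ, (1 - (P^2)^(i+1)))^3 *
        (Complex.exp (π*I/2) * Complex.exp (π*I*σ/4) * X *
          ((∏' i:ℕ, (1 - (P^2)^(i+1))) * ((∏' i:ℕ, (1 - X^2 * P^(2*i+2))) * (∏' i:ℕ, (1 - (X^2)⁻¹ * P^(2*i))))))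
      = Complex.exp (π*I/2) * (Complex.exp (π*I*σ/4) * Complex.exp (π*I*σ/4)) * X *
        (∏' i:ℕ, (1 - (P^2)^(i+1)))^4 *
        ((∏' i:ℕ, (1 - X^2 * P^(2*i+2))) * (∏' i:ℕ, (1 - (X^2)⁻¹ * P^(2*i)))) := by ring
    _ = _ := by
        rw [← merge1, ← merge2, ← pair2, ← pair3, ← hs2]
        ring

end ThetaAux

/-- Lemma 9.2, 1)(ii) of the paper: the NS super-character quotient. -/
theorem Psi_div_RNSminus (M : ℕ) (hM : 0 < M) (j : ℝ) (hj : ∃ n : ℤ, j = 1/2 + n)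
    (τ : ℂ) (hτ : 0 < τ.im) (z : ℂ)
    (h1 : jTheta 1 1 ((M : ℂ) * τ) (z + (j : ℂ) * τ) ≠ 0)
    (h2 : jTheta 0 0 τ z ≠ 0) (h3 : jTheta 0 1 τ z ≠ 0)
    (h4 : jTheta 1 0 τ z ≠ 0) (h5 : jTheta 1 1 τ z ≠ 0)
    (h6 : jTheta 1 1 τ (2 * z) ≠ 0) :
    Psi M 0 j j τ z z 0 / RNSminus τ z =
      -(Complex.exp (2 * (Real.pi : ℂ) * I * τ * ((j : ℂ) ^ 2 / (M : ℂ))) *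
        Complex.exp (4 * (Real.pi : ℂ) * I / (M : ℂ) * (j : ℂ) * z) *
        (jTheta 0 0 ((M : ℂ) * τ) (z + (j : ℂ) * τ) *
         jTheta 0 1 ((M : ℂ) * τ) (z + (j : ℂ) * τ) *
         jTheta 1 0 ((M : ℂ) * τ) (z + (j : ℂ) * τ) /
         jTheta 1 1 ((M : ℂ) * τ) (z + (j : ℂ) * τ)) *
        (jTheta 0 1 τ z / (jTheta 0 0 τ z * jTheta 1 0 τ z * jTheta 1 1 τ z))) := by
  have hMτ : 0 < (((M:ℕ):ℂ) * τ).im := by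
    have him : (((M:ℕ):ℂ) * τ).im = (M:ℝ) * τ.im := by
      simp [Complex.mul_im]
    rw [him]
    have hM' : (0:ℝ) < M := by exact_mod_cast hM
    exact mul_pos hM' hτ
  have e1 := theta_dup (((M:ℕ):ℂ) * τ) (z + (j:ℂ)*τ) hMτ
  have e2 := theta_dup τ z hτ
  have hPPP : jTheta 0 0 τ z * jTheta 0 1 τ z * jTheta 1 0 τ z * jTheta 1 1 τ z ≠ 0 :=
    mul_ne_zero (mul_ne_zero (mul_ne_zero h2 h3) h4) h5
  have hη : dedekindEta τ ^ 3 ≠ 0 := by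
    intro h0
    rw [h0, zero_mul] at e2
    exact hPPP e2.symm
  unfold Psi RNSminus
  simp only [Complex.ofReal_zero, add_zero, sub_zero, mul_zero, zero_div, neg_zero,
    Complex.exp_zero, mul_one]
  rw [show z + z + ((j:ℂ)+(j:ℂ))*τ = 2*(z + (j:ℂ)*τ) from by ring]
  rw [show 2*π*I*τ*((j:ℂ)*(j:ℂ)/((M:ℕ):ℂ)) = 2*π*I*τ*((j:ℂ)^2/((M:ℕ):ℂ)) from by ring]
  rw [show 2*π*I/((M:ℕ):ℂ)*((j:ℂ)*z+(j:ℂ)*z) = 4*π*I/((M:ℕ):ℂ)*(j:ℂ)*z from by ring]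
  set EA : ℂ := Complex.exp (2*π*I*τ*((j:ℂ)^2/((M:ℕ):ℂ))) with hEA
  set EB : ℂ := Complex.exp (4*π*I/((M:ℕ):ℂ)*(j:ℂ)*z) with hEB
  have hη' : dedekindEta τ ≠ 0 := fun h0 => hη (by rw [h0]; ring)
  set T1 : ℂ := jTheta 1 1 (((M:ℕ):ℂ) * τ) (z + (j:ℂ)*τ) with hT1
  set T2 : ℂ := jTheta 1 1 (((M:ℕ):ℂ) * τ) (2*(z + (j:ℂ)*τ)) with hT2
  set T3 : ℂ := jTheta 0 0 (((M:ℕ):ℂ) * τ) (z + (j:ℂ)*τ) with hT3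
  set T4 : ℂ := jTheta 0 1 (((M:ℕ):ℂ) * τ) (z + (j:ℂ)*τ) with hT4
  set T5 : ℂ := jTheta 1 0 (((M:ℕ):ℂ) * τ) (z + (j:ℂ)*τ) with hT5
  field_simp [h1, h2, h3, h4, h5, h6, hη', Complex.I_ne_zero, Complex.exp_ne_zero]
  linear_combination -(EA * EB * (jTheta 0 0 τ z * jTheta 0 1 τ z * jTheta 1 0 τ z * jTheta 1 1 τ z)) * e1
    + EA * EB * T1 * T3 * T4 * T5 * e2
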